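/- Let G(X) = 2(X¹²X³⁴ + X¹³X⁴² + X¹⁴X²³) be the Klein quadric form on Λ²ℂ⁴ and Q(X) = (a₁+a₂)(X¹²)² + (a₁+a₃)(X¹³)² + (a₁+a₄)(X¹⁴)² + (a₃+a₄)(X³⁴)² + (a₄+a₂)(X⁴²)² + (a₂+a₃)(X²³)² the Battaglini quadric of q₀ = diag(1,1,1,1) and q₁ = diag(a₁,a₂,a₃,a₄). Then the characteristic polynomial of the endomorphism G⁻¹Q is (t² − α)(t² − β)(t² − γ) where α = (a₁+a₂)(a₃+a₄), β = (a₁+a₃)(a₄+a₂), γ = (a₁+a₄)(a₂+a₃). In particular it is an even polynomial in t. -/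

import Mathlib

open Polynomial

/-- The matrix of the Klein quadric form `G(X) = 2(X¹²X³⁴ + X¹³X⁴² + X¹⁴X²³)` in
the basis `(X¹², X¹³, X¹⁴, X³⁴, X⁴², X²³)`. -/
noncomputable def G6 : Matrix (Fin 6) (Fin 6) ℂ :=
  !![0, 0, 0, 1, 0, 0;
     0, 0, 0, 0, 1, 0;
     0, 0, 0, 0, 0, 1;
     1, 0, 0, 0, 0, 0;
     0, 1, 0, 0, 0, 0;
     0, 0, 1, 0, 0, 0]

/-- The matrix of the Battaglini quadric of `q₀ = diag(1,1,1,1)` and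
`q₁ = diag(a₁,a₂,a₃,a₄)` in the basis `(X¹², X¹³, X¹⁴, X³⁴, X⁴², X²³)`. -/
noncomputable def Q6 (a : Fin 4 → ℂ) : Matrix (Fin 6) (Fin 6) ℂ :=
  Matrix.diagonal
    ![a 0 + a 1, a 0 + a 2, a 0 + a 3, a 2 + a 3, a 3 + a 1, a 1 + a 2]

lemma cons_val_five {α : Type*} {m : ℕ} (x : α) (u : Fin m.succ.succ.succ.succ.succ → α) :
    Matrix.vecCons x u 5 =
      Matrix.vecHead (Matrix.vecTail (Matrix.vecTail (Matrix.vecTail (Matrix.vecTail u)))) := rfl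

lemma castSucc_two {n : ℕ} : Fin.castSucc (2 : Fin (n+3)) = (2 : Fin (n+4)) := rfl

lemma G6_inv : G6⁻¹ = G6 := by
  apply Matrix.inv_eq_right_inv
  show G6 * G6 = 1
  ext i j
  fin_cases i <;> fin_cases j <;>
    simp [G6, Matrix.mul_apply, Fin.sum_univ_succ, Matrix.one_apply, cons_val_five]

lemma GQ (a : Fin 4 → ℂ) : G6 * Q6 a =
  !![0, 0, 0, a 2 + a 3, 0, 0;
     0, 0, 0, 0, a 3 + a 1, 0;
     0, 0, 0, 0, 0, a 1 + a 2;
     a 0 + a 1, 0, 0, 0, 0, 0;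
     0, a 0 + a 2, 0, 0, 0, 0;
     0, 0, a 0 + a 3, 0, 0, 0] := by
  ext i j
  fin_cases i <;> fin_cases j <;>
    simp [G6, Q6, Matrix.mul_apply, Fin.sum_univ_succ, Matrix.diagonal, cons_val_five,
      Matrix.vecHead, Matrix.vecTail]

set_option maxHeartbeats 2000000 in
set_option maxRecDepth 10000 in
/-- The characteristic polynomial of the endomorphism `G⁻¹Q` is
`(t² − α)(t² − β)(t² − γ)` with `α = (a₁+a₂)(a₃+a₄)`, `β = (a₁+a₃)(a₄+a₂)`,
`γ = (a₁+a₄)(a₂+a₃)`; in particular it is an even polynomial in `t`. -/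
theorem stmt15 (a : Fin 4 → ℂ) :
    (G6⁻¹ * Q6 a).charpoly =
      (X ^ 2 - C ((a 0 + a 1) * (a 2 + a 3))) *
        (X ^ 2 - C ((a 0 + a 2) * (a 3 + a 1))) *
        (X ^ 2 - C ((a 0 + a 3) * (a 1 + a 2))) := by
  rw [G6_inv, GQ, Matrix.charpoly]
  have hc : Matrix.charmatrix (!![0, 0, 0, a 2 + a 3, 0, 0;
     0, 0, 0, 0, a 3 + a 1, 0;
     0, 0, 0, 0, 0, a 1 + a 2;
     a 0 + a 1, 0, 0, 0, 0, 0;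
     0, a 0 + a 2, 0, 0, 0, 0;
     0, 0, a 0 + a 3, 0, 0, 0] : Matrix (Fin 6) (Fin 6) ℂ) =
    !![X, 0, 0, -C (a 2 + a 3), 0, 0;
       0, X, 0, 0, -C (a 3 + a 1), 0;
       0, 0, X, 0, 0, -C (a 1 + a 2);
       -C (a 0 + a 1), 0, 0, X, 0, 0;
       0, -C (a 0 + a 2), 0, 0, X, 0;
       0, 0, -C (a 0 + a 3), 0, 0, X] := by
    ext i j
    fin_cases i <;> fin_cases j <;>
      simp [Matrix.charmatrix_apply, Matrix.one_apply, cons_val_five,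
        Matrix.vecHead, Matrix.vecTail]
  rw [hc]
  simp [Matrix.det_succ_row_zero, Fin.sum_univ_succ, Fin.succAbove,
    castSucc_two, cons_val_five, Matrix.vecHead, Matrix.vecTail]
  ring
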